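/- In a four-coloring of the patch partition such that patches sharing an edge (4-connected neighbors) receive different colors, the supports of the indicator basis functions within one color class are pairwise disjoint, so the energy F(u + Σ_{i∈I_k} c^i φ_j^i) decouples: minimizing over the vector (c^i)_{i∈I_k} is equivalent to minimizing each one-dimensional function F restricted to patch τ_j^i independently, provided F is a sum of per-pixel terms depending only on a local neighborhood contained within the patch and its fixed surroundings. -/
import Mathlib


/-- Four-coloring decoupling: for non-adjacent disjoint patches within one
color class (each local neighborhood meets at most one patch of the class),
minimizing the energy over the vector of patch corrections is equivalent to
minimizing each one-dimensional patch problem independently. -/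
theorem four_color_decoupling (Ω : Type*) [Fintype Ω] [DecidableEq Ω]
    (g : (Ω → ℝ) → Ω → ℝ) (f : Ω → ℝ) (α : ℝ) (hα : 0 < α)
    (nbhd : Ω → Set Ω) (hself : ∀ x, x ∈ nbhd x)
    (hlocal : ∀ (u v : Ω → ℝ) (x : Ω), (∀ y ∈ nbhd x, u y = v y) → g u x = g v x)
    (N : ℕ) (τ : Fin N → Set Ω) [∀ i x, Decidable (x ∈ τ i)]
    (I : Finset (Fin N))
    (hdisj : ∀ i ∈ I, ∀ i' ∈ I, i ≠ i' → Disjoint (τ i) (τ i'))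
    (hsep : ∀ x : Ω, ∀ i ∈ I, ∀ i' ∈ I, (nbhd x ∩ τ i).Nonempty →
      (nbhd x ∩ τ i').Nonempty → i = i')
    (φ : Fin N → Ω → ℝ) (hφ : ∀ i x, φ i x = if x ∈ τ i then 1 else 0)
    (F : (Ω → ℝ) → ℝ)
    (hF : ∀ u : Ω → ℝ, F u = ∑ x, g u x + α / 2 * ∑ x, (u x - f x) ^ 2)
    (u : Ω → ℝ) (c : Fin N → ℝ) :
    (∀ c' : Fin N → ℝ,
        F (u + ∑ i ∈ I, c i • φ i) ≤ F (u + ∑ i ∈ I, c' i • φ i)) ↔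
      ∀ i ∈ I, ∀ t : ℝ, F (u + c i • φ i) ≤ F (u + t • φ i) := by
  classical
  -- key decomposition
  have key : ∀ c' : Fin N → ℝ, F (u + ∑ i ∈ I, c' i • φ i)
      = F u + ∑ i ∈ I, (F (u + c' i • φ i) - F u) := by
    intro c'
    -- pixelwise identities
    have hg : ∀ x, g (u + ∑ i ∈ I, c' i • φ i) x
        = g u x + ∑ i ∈ I, (g (u + c' i • φ i) x - g u x) := by
      intro x
      by_cases hx : ∃ i0 ∈ I, (nbhd x ∩ τ i0).Nonempty
      · obtain ⟨i0, hi0, hne⟩ := hx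
        have hzero : ∀ i ∈ I, i ≠ i0 → ∀ y ∈ nbhd x, y ∉ τ i := by
          intro i hi hne' y hy hyt
          exact hne' (hsep x i hi i0 hi0 ⟨y, hy, hyt⟩ hne)
        have hsum : ∑ i ∈ I, (g (u + c' i • φ i) x - g u x)
            = g (u + c' i0 • φ i0) x - g u x := by
          refine Finset.sum_eq_single_of_mem i0 hi0 ?_
          intro i hi hne'
          have : g (u + c' i • φ i) x = g u x := by
            apply hlocal
            intro y hy
            simp [hφ, hzero i hi hne' y hy]
          rw [this]; ring
        rw [hsum]
        have hmain : g (u + ∑ i ∈ I, c' i • φ i) x = g (u + c' i0 • φ i0) x := by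
          apply hlocal
          intro y hy
          have hsumy : (∑ i ∈ I, c' i • φ i) y = c' i0 • φ i0 y := by
            rw [Finset.sum_apply]
            refine Finset.sum_eq_single_of_mem i0 hi0 ?_
            intro i hi hne'
            simp [hφ, hzero i hi hne' y hy]
          simp [hsumy]
        rw [hmain]; ring
      · push_neg at hx
        have hzero : ∀ i ∈ I, ∀ y ∈ nbhd x, y ∉ τ i := by
          intro i hi y hy hyt
          exact Set.eq_empty_iff_forall_notMem.1 (hx i hi) y ⟨hy, hyt⟩
        have hsum : ∑ i ∈ I, (g (u + c' i • φ i) x - g u x) = 0 := by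
          refine Finset.sum_eq_zero ?_
          intro i hi
          have : g (u + c' i • φ i) x = g u x := by
            apply hlocal
            intro y hy
            simp [hφ, hzero i hi y hy]
          rw [this]; ring
        have hmain : g (u + ∑ i ∈ I, c' i • φ i) x = g u x := by
          apply hlocal
          intro y hy
          have hsumy : (∑ i ∈ I, c' i • φ i) y = 0 := by
            rw [Finset.sum_apply]
            refine Finset.sum_eq_zero ?_
            intro i hi
            simp [hφ, hzero i hi y hy]
          simp [hsumy]
        rw [hmain, hsum]; ring
    have hq : ∀ x, ((u + ∑ i ∈ I, c' i • φ i) x - f x) ^ 2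
        = (u x - f x) ^ 2 + ∑ i ∈ I, (((u + c' i • φ i) x - f x) ^ 2 - (u x - f x) ^ 2) := by
      intro x
      by_cases hx : ∃ i0 ∈ I, (nbhd x ∩ τ i0).Nonempty
      · obtain ⟨i0, hi0, hne⟩ := hx
        have hzero : ∀ i ∈ I, i ≠ i0 → x ∉ τ i := by
          intro i hi hne' hyt
          exact hne' (hsep x i hi i0 hi0 ⟨x, hself x, hyt⟩ hne)
        have hsum : ∑ i ∈ I, (((u + c' i • φ i) x - f x) ^ 2 - (u x - f x) ^ 2)
            = ((u + c' i0 • φ i0) x - f x) ^ 2 - (u x - f x) ^ 2 := by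
          refine Finset.sum_eq_single_of_mem i0 hi0 ?_
          intro i hi hne'
          simp [hφ, hzero i hi hne']
        have hsumx : (∑ i ∈ I, c' i • φ i) x = c' i0 • φ i0 x := by
          rw [Finset.sum_apply]
          refine Finset.sum_eq_single_of_mem i0 hi0 ?_
          intro i hi hne'
          simp [hφ, hzero i hi hne']
        rw [hsum]
        simp only [Pi.add_apply, hsumx, Pi.smul_apply, smul_eq_mul]
        ring
      · push_neg at hx
        have hzero : ∀ i ∈ I, x ∉ τ i := by
          intro i hi hyt
          exact Set.eq_empty_iff_forall_notMem.1 (hx i hi) x ⟨hself x, hyt⟩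
        have hsum : ∑ i ∈ I, (((u + c' i • φ i) x - f x) ^ 2 - (u x - f x) ^ 2) = 0 := by
          refine Finset.sum_eq_zero ?_
          intro i hi
          simp [hφ, hzero i hi]
        have hsumx : (∑ i ∈ I, c' i • φ i) x = 0 := by
          rw [Finset.sum_apply]
          refine Finset.sum_eq_zero ?_
          intro i hi
          simp [hφ, hzero i hi]
        rw [hsum]
        simp [hsumx]
    simp only [hF]
    have h1 : ∑ x, g (u + ∑ i ∈ I, c' i • φ i) x
        = ∑ x, g u x + ∑ i ∈ I, (∑ x, g (u + c' i • φ i) x - ∑ x, g u x) := by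
      calc ∑ x, g (u + ∑ i ∈ I, c' i • φ i) x
          = ∑ x, (g u x + ∑ i ∈ I, (g (u + c' i • φ i) x - g u x)) :=
            Finset.sum_congr rfl (fun x _ => hg x)
        _ = ∑ x, g u x + ∑ i ∈ I, (∑ x, g (u + c' i • φ i) x - ∑ x, g u x) := by
            rw [Finset.sum_add_distrib, Finset.sum_comm]
            simp [Finset.sum_sub_distrib]
    have h2 : ∑ x, ((u + ∑ i ∈ I, c' i • φ i) x - f x) ^ 2
        = ∑ x, (u x - f x) ^ 2
          + ∑ i ∈ I, (∑ x, ((u + c' i • φ i) x - f x) ^ 2 - ∑ x, (u x - f x) ^ 2) := by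
      calc ∑ x, ((u + ∑ i ∈ I, c' i • φ i) x - f x) ^ 2
          = ∑ x, ((u x - f x) ^ 2
              + ∑ i ∈ I, (((u + c' i • φ i) x - f x) ^ 2 - (u x - f x) ^ 2)) :=
            Finset.sum_congr rfl (fun x _ => hq x)
        _ = _ := by
            rw [Finset.sum_add_distrib, Finset.sum_comm]
            simp [Finset.sum_sub_distrib]
    rw [h1, h2]
    have h3 : ∑ i ∈ I,
        ((∑ x, g (u + c' i • φ i) x + α / 2 * ∑ x, ((u + c' i • φ i) x - f x) ^ 2)
          - (∑ x, g u x + α / 2 * ∑ x, (u x - f x) ^ 2))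
        = ∑ i ∈ I, ((∑ x, g (u + c' i • φ i) x - ∑ x, g u x)
            + α / 2 * (∑ x, ((u + c' i • φ i) x - f x) ^ 2 - ∑ x, (u x - f x) ^ 2)) :=
      Finset.sum_congr rfl (fun i _ => by ring)
    rw [h3, Finset.sum_add_distrib, ← Finset.mul_sum]
    ring
  constructor
  · intro h i hi t
    have hs : ∀ t', ∑ j ∈ I, (F (u + (Function.update c i t') j • φ j) - F u)
        = (F (u + t' • φ i) - F u) + ∑ j ∈ I.erase i, (F (u + c j • φ j) - F u) := by
      intro t'
      rw [← Finset.add_sum_erase _ _ hi]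
      congr 1
      · simp
      · refine Finset.sum_congr rfl ?_
        intro j hj
        rw [Function.update_of_ne (Finset.ne_of_mem_erase hj)]
    have h1 := h (Function.update c i t)
    rw [key, key] at h1
    have hc : ∑ j ∈ I, (F (u + c j • φ j) - F u)
        = (F (u + c i • φ i) - F u) + ∑ j ∈ I.erase i, (F (u + c j • φ j) - F u) := by
      have := hs (c i)
      rwa [Function.update_eq_self] at this
    rw [hc, hs t] at h1
    linarith
  · intro h c'
    rw [key, key]
    have : ∑ i ∈ I, (F (u + c i • φ i) - F u) ≤ ∑ i ∈ I, (F (u + c' i • φ i) - F u) :=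
      Finset.sum_le_sum (fun i hi => by have := h i hi (c' i); linarith)
    linarith
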